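/- The loop x(λ) = diag(λ, λ⁻¹) in ΛSL(2,ℂ) satisfies the reality condition (ρ̂x)(λ) := conj(x(conj λ)) = x(λ) of the first kind associated to SL(2,ℝ), lies in the identity component of ΛSL(2,ℂ), but does not lie in the big cell Λ⁻SL(2,ℂ)·Λ⁺SL(2,ℂ); hence the global Birkhoff decomposition fails for the non-compact real form SL(2,ℝ). -/
import Mathlib

open Metric Complex Set

/-- An element of `Λ⁺GL(2,ℂ)` via its holomorphic extension to the closed unit
disc. -/
def HolDisc (f : ℂ → Matrix (Fin 2) (Fin 2) ℂ) : Prop :=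
  (∀ i j, ContinuousOn (fun z => f z i j) (Metric.closedBall 0 1)) ∧
    (∀ i j, DifferentiableOn ℂ (fun z => f z i j) (Metric.ball 0 1)) ∧
    ∀ z ∈ Metric.closedBall (0 : ℂ) 1, IsUnit (f z)

/-- substitution z ↦ z⁻¹ in a circle integral -/
lemma circle_flip (f : ℂ → ℂ) :
    (∮ z in C((0:ℂ), 1), z⁻¹ * (f z⁻¹ * z⁻¹)) = ∮ z in C((0:ℂ), 1), f z := by
  have key : ∀ θ : ℝ, (circleMap 0 1 θ)⁻¹ = circleMap 0 1 (-θ) := by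
    intro θ
    simp only [circleMap_zero, one_mul]
    push_cast
    ring_nf
    exact (Complex.exp_neg _).symm
  have hmul : ∀ θ : ℝ, circleMap 0 1 θ * circleMap 0 1 (-θ) = 1 := by
    intro θ
    simp only [circleMap_zero, one_mul]
    push_cast
    simp only [one_mul]
    rw [← Complex.exp_add]
    norm_num
  have h1 : ∀ θ : ℝ, deriv (circleMap 0 1) θ • ((circleMap 0 1 θ)⁻¹ *
      (f ((circleMap 0 1 θ)⁻¹) * (circleMap 0 1 θ)⁻¹))
      = circleMap 0 1 (-θ) * I * f (circleMap 0 1 (-θ)) := by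
    intro θ
    rw [deriv_circleMap, key, smul_eq_mul]
    linear_combination (I * f (circleMap 0 1 (-θ)) * circleMap 0 1 (-θ)) * hmul θ
  have hper : Function.Periodic (fun θ : ℝ => circleMap 0 1 θ * I * f (circleMap 0 1 θ))
      (2 * Real.pi) := fun θ => by simp [periodic_circleMap 0 1 θ]
  calc (∮ z in C((0:ℂ), 1), z⁻¹ * (f z⁻¹ * z⁻¹))
      = ∫ θ in (0:ℝ)..2 * Real.pi,
        (fun θ : ℝ => circleMap 0 1 θ * I * f (circleMap 0 1 θ)) (-θ) :=
        intervalIntegral.integral_congr fun θ _ => h1 θ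
    _ = ∫ θ in (-(2 * Real.pi))..(-(0:ℝ)),
        circleMap 0 1 θ * I * f (circleMap 0 1 θ) :=
        intervalIntegral.integral_comp_neg fun θ => circleMap 0 1 θ * I * f (circleMap 0 1 θ)
    _ = ∫ θ in (0:ℝ)..2 * Real.pi, circleMap 0 1 θ * I * f (circleMap 0 1 θ) := by
        have := hper.intervalIntegral_add_eq (-(2 * Real.pi)) 0
        simpa using this
    _ = ∮ z in C((0:ℂ), 1), f z := by
        simp only [circleIntegral, deriv_circleMap, smul_eq_mul]

/-- If `S` extends holomorphically to the disc and agrees on the circle with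
`z ↦ A (z⁻¹) * z⁻¹` for `A` holomorphic on the disc, then `S 0 = 0`. -/
lemma coeff_zero (A S : ℂ → ℂ) (hA : DiffContOnCl ℂ A (ball 0 1))
    (hS : DiffContOnCl ℂ S (ball 0 1))
    (hrel : ∀ z : ℂ, ‖z‖ = 1 → S z = A z⁻¹ * z⁻¹) : S 0 = 0 := by
  have h1 : (∮ z in C((0:ℂ), 1), (z - 0)⁻¹ • S z) = (2 * Real.pi * I : ℂ) • S 0 :=
    hS.circleIntegral_sub_inv_smul (mem_ball_self one_pos)
  have h2 : (∮ z in C((0:ℂ), 1), (z - 0)⁻¹ • S z)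
      = ∮ z in C((0:ℂ), 1), z⁻¹ * (A z⁻¹ * z⁻¹) := by
    refine circleIntegral.integral_congr zero_le_one fun z hz => ?_
    rw [mem_sphere_zero_iff_norm] at hz
    simp [hrel z hz, smul_eq_mul, mul_assoc]
  have h4 : (∮ z in C((0:ℂ), 1), A z) = 0 :=
    Complex.circleIntegral_eq_zero_of_differentiable_on_off_countable zero_le_one
      Set.countable_empty (by simpa [closure_ball (0:ℂ) one_ne_zero] using hA.continuousOn)
      (fun z hz => hA.differentiableAt isOpen_ball hz.1)
  have h5 : (2 * Real.pi * I : ℂ) • S 0 = 0 := by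
    rw [← h1, h2, circle_flip, h4]
  have hne : (2 * Real.pi * I : ℂ) ≠ 0 := by
    simp [Real.pi_ne_zero, Complex.I_ne_zero, Complex.ext_iff, Real.pi_pos.ne']
  simpa [smul_eq_mul, hne] using h5

noncomputable def sC (t : ℝ) : ℂ := ((max 0 (2 * t - 1) : ℝ) : ℂ)
noncomputable def cC (t : ℝ) : ℂ := ((Real.cos (Real.pi * min t (1/2)) : ℝ) : ℂ)
noncomputable def snC (t : ℝ) : ℂ := ((Real.sin (Real.pi * min t (1/2)) : ℝ) : ℂ)

/-- The contracting homotopy. -/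
noncomputable def Hdef (t : ℝ) (z : ℂ) : Matrix (Fin 2) (Fin 2) ℂ :=
  !![(1 - sC t ^ 2) * cC t + sC t * (2 - sC t ^ 2) * snC t * z,
     -((1 - sC t ^ 2) * snC t) + sC t * (2 - sC t ^ 2) * cC t * z;
     -(sC t * cC t * z⁻¹) + (1 - sC t ^ 2) * snC t,
     sC t * snC t * z⁻¹ + (1 - sC t ^ 2) * cC t]

lemma sC_cont : Continuous sC :=
  Complex.continuous_ofReal.comp (continuous_const.max (by fun_prop))
lemma cC_cont : Continuous cC :=
  Complex.continuous_ofReal.comp (Real.continuous_cos.comp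
    (continuous_const.mul (continuous_id.min continuous_const)))
lemma snC_cont : Continuous snC :=
  Complex.continuous_ofReal.comp (Real.continuous_sin.comp
    (continuous_const.mul (continuous_id.min continuous_const)))

lemma sC_zero : sC 0 = 0 := by norm_num [sC]
lemma sC_one : sC 1 = 1 := by norm_num [sC]
lemma cC_zero : cC 0 = 1 := by norm_num [cC]
lemma snC_zero : snC 0 = 0 := by norm_num [snC]
lemma cC_one : cC 1 = 0 := by
  rw [cC, show Real.pi * min 1 (1/2) = Real.pi / 2 by rw [show (min 1 (1/2) : ℝ) = 1/2 by norm_num]; ring, Real.cos_pi_div_two]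
  norm_num
lemma snC_one : snC 1 = 1 := by
  rw [snC, show Real.pi * min 1 (1/2) = Real.pi / 2 by rw [show (min 1 (1/2) : ℝ) = 1/2 by norm_num]; ring, Real.sin_pi_div_two]
  norm_num

/-- The loop `x(z) = diag(z, z⁻¹)` in `ΛSL(2,ℂ)`:
(a) satisfies the reality condition `conj(x(conj z)) = x(z)` of the first kind
    associated to `SL(2,ℝ)`;
(b) lies in the identity component of `ΛSL(2,ℂ)` (there is a continuous homotopy
    through `SL(2,ℂ)`-valued loops from the constant loop `I` to `x`);
(c) is not in the big cell `Λ⁻SL(2,ℂ)·Λ⁺SL(2,ℂ)`: it admits no factorization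
    `x(z) = gm(z⁻¹) · gp(z)` with `gm, gp` holomorphic on the closed disc with
    determinant `1`. -/
theorem stmt_9 :
    (∀ z : ℂ, ‖z‖ = 1 →
      (Matrix.diagonal ![star z, (star z)⁻¹]).map (starRingEnd ℂ)
        = Matrix.diagonal ![z, z⁻¹]) ∧
    (∃ H : ℝ → ℂ → Matrix (Fin 2) (Fin 2) ℂ,
      (∀ i j, ContinuousOn (fun p : ℝ × ℂ => H p.1 p.2 i j)
        (Set.Icc 0 1 ×ˢ Metric.sphere 0 1)) ∧
      (∀ z : ℂ, ‖z‖ = 1 → H 0 z = 1 ∧ H 1 z = Matrix.diagonal ![z, z⁻¹]) ∧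
      (∀ t ∈ Set.Icc (0 : ℝ) 1, ∀ z : ℂ, ‖z‖ = 1 → (H t z).det = 1)) ∧
    ¬ (∃ gm gp : ℂ → Matrix (Fin 2) (Fin 2) ℂ, HolDisc gm ∧ HolDisc gp ∧
      (∀ z ∈ Metric.closedBall (0 : ℂ) 1, (gm z).det = 1 ∧ (gp z).det = 1) ∧
      ∀ z : ℂ, ‖z‖ = 1 → Matrix.diagonal ![z, z⁻¹] = gm z⁻¹ * gp z) := by
  refine ⟨?parta, ?partb, ?partc⟩
  case parta =>
    intro z hz
    ext i j
    rw [Matrix.map_apply]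
    rcases Fin.exists_fin_two.mp ⟨i, rfl⟩ with h | h <;>
      rcases Fin.exists_fin_two.mp ⟨j, rfl⟩ with h' | h' <;> subst h <;> subst h' <;>
      simp [Matrix.diagonal, map_inv₀]
  case partb =>
    refine ⟨Hdef, ?cont, ?ends, ?dets⟩
    case cont =>
      intro i j
      have hs : Continuous fun p : ℝ × ℂ => sC p.1 := sC_cont.comp continuous_fst
      have hc : Continuous fun p : ℝ × ℂ => cC p.1 := cC_cont.comp continuous_fst
      have hq : Continuous fun p : ℝ × ℂ => snC p.1 := snC_cont.comp continuous_fst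
      have hinv : ContinuousOn (fun p : ℝ × ℂ => (p.2)⁻¹)
          (Set.Icc (0:ℝ) 1 ×ˢ Metric.sphere 0 1) := by
        refine ContinuousOn.inv₀ continuous_snd.continuousOn fun p hp => ?_
        have := hp.2
        rw [mem_sphere_zero_iff_norm] at this
        intro h0
        rw [h0] at this
        simp at this
      fin_cases i <;> fin_cases j <;>
        simp only [Hdef, Matrix.cons_val', Matrix.cons_val_zero, Matrix.cons_val_one,
          Matrix.head_cons, Matrix.head_fin_const, Matrix.of_apply, Matrix.empty_val',
          Matrix.cons_val_fin_one, Fin.isValue, Fin.zero_eta, Fin.mk_one]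
      · exact (((continuous_const.sub (hs.pow 2)).mul hc).add
          (((hs.mul (continuous_const.sub (hs.pow 2))).mul hq).mul continuous_snd)).continuousOn
      · exact ((((continuous_const.sub (hs.pow 2)).mul hq).neg).add
          (((hs.mul (continuous_const.sub (hs.pow 2))).mul hc).mul continuous_snd)).continuousOn
      · exact (((hs.mul hc).continuousOn.mul hinv).neg).add
          ((continuous_const.sub (hs.pow 2)).mul hq).continuousOn
      · exact ((hs.mul hq).continuousOn.mul hinv).add
          ((continuous_const.sub (hs.pow 2)).mul hc).continuousOn
    case ends =>
      intro z hz
      constructor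
      · rw [show Hdef 0 z = !![1,0;0,1] by
          simp [Hdef, sC_zero, cC_zero, snC_zero]]
        exact Matrix.one_fin_two.symm
      · ext i j
        rcases Fin.exists_fin_two.mp ⟨i, rfl⟩ with h | h <;>
          rcases Fin.exists_fin_two.mp ⟨j, rfl⟩ with h' | h' <;> subst h <;> subst h' <;>
          simp [Hdef, sC_one, cC_one, snC_one, Matrix.diagonal] <;> ring
    case dets =>
      intro t _ z hz
      have hz0 : z ≠ 0 := by intro h; rw [h] at hz; simp at hz
      have hzz : z * z⁻¹ = 1 := mul_inv_cancel₀ hz0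
      have hcs : cC t ^ 2 + snC t ^ 2 = 1 := by
        have h := Real.cos_sq_add_sin_sq (Real.pi * min t (1/2))
        rw [cC, snC]
        exact_mod_cast h
      simp only [Hdef, Matrix.det_fin_two_of]
      linear_combination ((1 - sC t ^ 2) ^ 2 + sC t ^ 2 * (2 - sC t ^ 2) * (z * z⁻¹)) * hcs
        + (sC t ^ 2 * (2 - sC t ^ 2)) * hzz
  case partc =>
    rintro ⟨gm, gp, ⟨hmc, hmd, -⟩, ⟨hpc, hpd, -⟩, hdet, hfac⟩
    have hclos : closure (ball (0:ℂ) 1) = closedBall (0:ℂ) 1 := closure_ball (0:ℂ) one_ne_zero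
    have hdm : ∀ i j, DiffContOnCl ℂ (fun w => gm w i j) (ball 0 1) :=
      fun i j => ⟨hmd i j, by rw [hclos]; exact hmc i j⟩
    have hdp : ∀ i j, DiffContOnCl ℂ (fun z => gp z i j) (ball 0 1) :=
      fun i j => ⟨hpd i j, by rw [hclos]; exact hpc i j⟩
    -- relations on the circle
    have hrel : ∀ z : ℂ, ‖z‖ = 1 →
        gp z 1 1 = gm z⁻¹ 0 0 * z⁻¹ ∧ gp z 0 1 = -(gm z⁻¹ 0 1) * z⁻¹ := by
      intro z hz
      have hz0 : z ≠ 0 := by intro h; rw [h] at hz; simp at hz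
      have hw : z⁻¹ ∈ closedBall (0:ℂ) 1 := by
        rw [mem_closedBall_zero_iff, norm_inv, hz]; norm_num
      have hdet1 : gm z⁻¹ 0 0 * gm z⁻¹ 1 1 - gm z⁻¹ 0 1 * gm z⁻¹ 1 0 = 1 := by
        rw [← Matrix.det_fin_two]; exact (hdet _ hw).1
      have heq := hfac z hz
      have e01 : (0:ℂ) = gm z⁻¹ 0 0 * gp z 0 1 + gm z⁻¹ 0 1 * gp z 1 1 := by
        have := congrFun (congrFun heq 0) 1
        simpa [Matrix.mul_apply, Fin.sum_univ_two, Matrix.diagonal] using this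
      have e11 : z⁻¹ = gm z⁻¹ 1 0 * gp z 0 1 + gm z⁻¹ 1 1 * gp z 1 1 := by
        have := congrFun (congrFun heq 1) 1
        simpa [Matrix.mul_apply, Fin.sum_univ_two, Matrix.diagonal] using this
      constructor
      · linear_combination (gm z⁻¹ 1 0) * e01 - (gm z⁻¹ 0 0) * e11 - (gp z 1 1) * hdet1
      · linear_combination (-(gm z⁻¹ 1 1)) * e01 + (gm z⁻¹ 0 1) * e11 - (gp z 0 1) * hdet1
    have hs0 : gp 0 1 1 = 0 :=
      coeff_zero (fun w => gm w 0 0) (fun z => gp z 1 1) (hdm 0 0) (hdp 1 1)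
        fun z hz => (hrel z hz).1
    have hq0 : gp 0 0 1 = 0 :=
      coeff_zero (fun w => -(gm w 0 1)) (fun z => gp z 0 1) (hdm 0 1).neg (hdp 0 1)
        fun z hz => by
          show gp z 0 1 = -gm z⁻¹ 0 1 * z⁻¹
          exact (hrel z hz).2
    have hdet0 : (gp 0).det = 1 := (hdet 0 (by simp)).2
    rw [Matrix.det_fin_two, hs0, hq0] at hdet0
    simp at hdet0
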